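/- Let G be a structurally-reversible I-unfolding of a Petri net A. For every cycle θ on a state q of G, there exists a cycle θ' on q such that Δ(θ') = −Δ(θ). -/
import Mathlib


open scoped BigOperators

/-- A configuration is a vector in `ℕ^d`. -/
abbrev Cfg (d : ℕ) := Fin d → ℕ

/-- A Petri net action is a pair of configurations. -/
abbrev PNAction (d : ℕ) := Cfg d × Cfg d

/-- Displacement of an action. -/
def disp {d : ℕ} (a : PNAction d) : Fin d → ℤ :=
  fun i => (a.2 i : ℤ) - (a.1 i : ℤ)

/-- Infinity norm of an action. -/
def anorm {d : ℕ} (a : PNAction d) : ℕ :=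
  Finset.univ.sup fun i => max (a.1 i) (a.2 i)

/-- Infinity norm of a Petri net. -/
def netNorm {d : ℕ} (A : Finset (PNAction d)) : ℕ := A.sup anorm

/-- Step relation of a single action. -/
def Step {d : ℕ} (a : PNAction d) (x y : Cfg d) : Prop :=
  ∃ c : Cfg d, x = a.1 + c ∧ y = a.2 + c

/-- Step relation of a word of actions. -/
def Fires {d : ℕ} : List (PNAction d) → Cfg d → Cfg d → Prop
  | [], x, y => x = y
  | a :: σ, x, y => ∃ z, Step a x z ∧ Fires σ z y

/-- Displacement of a word of actions. -/
def wdisp {d : ℕ} (σ : List (PNAction d)) : Fin d → ℤ :=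
  (σ.map disp).sum

/-- Reachability relation of a Petri net. -/
def Reach {d : ℕ} (A : Finset (PNAction d)) (x y : Cfg d) : Prop :=
  ∃ σ : List (PNAction d), (∀ a ∈ σ, a ∈ A) ∧ Fires σ x y

/-- Mutual reachability. -/
def MutualReach {d : ℕ} (A : Finset (PNAction d)) (x y : Cfg d) : Prop :=
  Reach A x y ∧ Reach A y x

/-- A strongly connected component of configurations: an equivalence class of mutual
reachability. -/
def IsSCCC {d : ℕ} (A : Finset (PNAction d)) (C : Set (Cfg d)) : Prop :=
  ∃ c₀ : Cfg d, C = {x | MutualReach A c₀ x}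

/-- An `I`-configuration. -/
abbrev ICfg (d : ℕ) (I : Finset (Fin d)) := {i : Fin d // i ∈ I} → ℕ

/-- Restriction of a configuration to the components in `I`. -/
def restrictC {d : ℕ} (I : Finset (Fin d)) (c : Cfg d) : ICfg d I := fun i => c i.1

/-- Step relation of an action on `I`-configurations. -/
def IStep {d : ℕ} {I : Finset (Fin d)} (a : PNAction d) (p q : ICfg d I) : Prop :=
  ∃ c : ICfg d I, p = restrictC I a.1 + c ∧ q = restrictC I a.2 + c

/-- A transition of an `I`-unfolding. -/
abbrev UTrans (d : ℕ) (I : Finset (Fin d)) := ICfg d I × PNAction d × ICfg d I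

/-- Path from `p` to `q` in a transition set. -/
def IsPath {d : ℕ} {I : Finset (Fin d)} (T : Finset (UTrans d I)) :
    List (UTrans d I) → ICfg d I → ICfg d I → Prop
  | [], p, q => p = q
  | t :: π, p, q => t ∈ T ∧ t.1 = p ∧ IsPath T π t.2.2 q

/-- Label of a path. -/
def plabel {d : ℕ} {I : Finset (Fin d)} (π : List (UTrans d I)) : List (PNAction d) :=
  π.map fun t => t.2.1

/-- Displacement of a path. -/
def pdisp {d : ℕ} {I : Finset (Fin d)} (π : List (UTrans d I)) : Fin d → ℤ :=
  wdisp (plabel π)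

/-- An `I`-unfolding of a Petri net `A`. -/
structure Unfolding (d : ℕ) (I : Finset (Fin d)) (A : Finset (PNAction d)) where
  Q : Finset (ICfg d I)
  T : Finset (UTrans d I)
  Q_nonempty : Q.Nonempty
  T_mem : ∀ t ∈ T, t.1 ∈ Q ∧ t.2.1 ∈ A ∧ t.2.2 ∈ Q
  T_step : ∀ t ∈ T, IStep t.2.1 t.1 t.2.2
  connected : ∀ p ∈ Q, ∀ q ∈ Q, ∃ π, IsPath T π p q

/-- Structural reversibility. -/
def StructRev {d : ℕ} {I : Finset (Fin d)} {A : Finset (PNAction d)}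
    (G : Unfolding d I A) : Prop :=
  ∀ t ∈ G.T, ∃ π, IsPath G.T π t.2.2 t.1 ∧ wdisp (plabel (t :: π)) = 0

/-- Simple cycle on a state `q`. -/
def SimpleCycle {d : ℕ} {I : Finset (Fin d)} (T : Finset (UTrans d I))
    (π : List (UTrans d I)) (q : ICfg d I) : Prop :=
  IsPath T π q q ∧ π ≠ [] ∧ (π.map fun t => t.2.2).Nodup

/-- The lattice spanned by the displacements of the simple cycles of `G`. -/
def LG {d : ℕ} {I : Finset (Fin d)} {A : Finset (PNAction d)}
    (G : Unfolding d I A) : AddSubgroup (Fin d → ℤ) :=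
  AddSubgroup.closure {v | ∃ q ∈ G.Q, ∃ π, SimpleCycle G.T π q ∧ pdisp π = v}

/-- The coset `Δ(π) + L_G` for paths `π` from `p` to `q`. -/
def LpGq {d : ℕ} {I : Finset (Fin d)} {A : Finset (PNAction d)}
    (G : Unfolding d I A) (p q : ICfg d I) : Set (Fin d → ℤ) :=
  {v | ∃ π, IsPath G.T π p q ∧ v - pdisp π ∈ LG G}

/-- The bound `b := (3dm)^((d+2)^(2d+1))`. -/
def bVal (d m : ℕ) : ℕ := (3 * d * m) ^ ((d + 2) ^ (2 * d + 1))

/-- The threshold `m·r³·(3drm)^d`. -/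
def thrVal (d m r : ℕ) : ℕ := m * r ^ 3 * (3 * d * r * m) ^ d

/-- A pumping pair for `(q, G)`: a pair of words labeling cycles on `q` of length at
most `d·b^d`. -/
def PumpingPair {d : ℕ} {I : Finset (Fin d)} {A : Finset (PNAction d)}
    (G : Unfolding d I A) (q : ICfg d I) (u v : List (PNAction d)) : Prop :=
  (∃ α, IsPath G.T α q q ∧ plabel α = u ∧ α.length ≤ d * (bVal d (netNorm A)) ^ d) ∧
  (∃ β, IsPath G.T β q q ∧ plabel β = v ∧ β.length ≤ d * (bVal d (netNorm A)) ^ d)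

/-- The upward-closed set `U_{q,G}`. -/
def UqG {d : ℕ} {I : Finset (Fin d)} {A : Finset (PNAction d)}
    (G : Unfolding d I A) (q : ICfg d I) : Set (Cfg d) :=
  {c | q ≤ restrictC I c ∧ ∃ u v, PumpingPair G q u v ∧
    ∃ cm cp : Cfg d, Fires u cm c ∧ Fires v c cp ∧
      ∀ i : Fin d, i ∉ I →
        thrVal d (netNorm A) G.Q.card ≤ cm i ∧ thrVal d (netNorm A) G.Q.card ≤ cp i}


lemma pdisp_append {d : ℕ} {I : Finset (Fin d)} (π₁ π₂ : List (UTrans d I)) :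
    pdisp (π₁ ++ π₂) = pdisp π₁ + pdisp π₂ := by
  simp [pdisp, plabel, wdisp]

lemma IsPath_append {d : ℕ} {I : Finset (Fin d)} {T : Finset (UTrans d I)}
    {π₁ π₂ : List (UTrans d I)} {p q r : ICfg d I}
    (h₁ : IsPath T π₁ p q) (h₂ : IsPath T π₂ q r) :
    IsPath T (π₁ ++ π₂) p r := by
  induction π₁ generalizing p with
  | nil => simpa [IsPath] using h₁ ▸ h₂
  | cons t π ih =>
    obtain ⟨ht, hp, htail⟩ := h₁
    exact ⟨ht, hp, ih htail⟩

lemma reverse_path {d : ℕ} {I : Finset (Fin d)} {A : Finset (PNAction d)}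
    (G : Unfolding d I A) (hrev : StructRev G) :
    ∀ (π : List (UTrans d I)) (p q : ICfg d I), IsPath G.T π p q →
      ∃ π', IsPath G.T π' q p ∧ pdisp π' = -pdisp π := by
  intro π
  induction π with
  | nil =>
    intro p q h
    exact ⟨[], h.symm, by simp [pdisp, plabel, wdisp]⟩
  | cons t π ih =>
    intro p q h
    obtain ⟨ht, hp, htail⟩ := h
    obtain ⟨σ, hσ, hσd⟩ := ih t.2.2 q htail
    obtain ⟨τ, hτ, hτd⟩ := hrev t ht
    refine ⟨σ ++ τ, IsPath_append hσ (hp ▸ hτ), ?_⟩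
    rw [pdisp_append, hσd]
    have hτd' : disp t.2.1 + pdisp τ = 0 := by
      simpa [pdisp, plabel, wdisp] using hτd
    have hdc : pdisp (t :: π) = disp t.2.1 + pdisp π := by
      simp [pdisp, plabel, wdisp]
    have : pdisp τ = -disp t.2.1 := by linear_combination hτd'
    rw [this, hdc]; abel

/-- In a structurally-reversible `I`-unfolding, for every cycle
`θ` on a state `q` there exists a cycle `θ'` on `q` with `Δ(θ') = −Δ(θ)`. -/
theorem cycle_displacement_negation {d : ℕ} {I : Finset (Fin d)}
    {A : Finset (PNAction d)} (G : Unfolding d I A) (hrev : StructRev G)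
    (q : ICfg d I) (hq : q ∈ G.Q) (θ : List (UTrans d I))
    (hθ : IsPath G.T θ q q) :
    ∃ θ' : List (UTrans d I), IsPath G.T θ' q q ∧ pdisp θ' = -pdisp θ := by
  exact reverse_path G hrev θ q q hθ
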